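/- Taking solution sets of pp formulas commutes with directed colimits: if M is the colimit of a directed system (M_i) of R-modules, then φ(M) is the union (colimit) of the images of the φ(M_i) in M^k. -/

import Mathlib

/-- The set of `k`-tuples in `M` that extend to a solution in `M^n` of the homogeneous
system `∑ i, r i j • x i = 0` (for all `j`): a pp-definable subset. -/
def ppSet (R : Type*) [Ring R] {n m k : ℕ} (h : k ≤ n) (r : Fin n → Fin m → R)
    (M : Type*) [AddCommGroup M] [Module R M] : Set (Fin k → M) :=
  { a | ∃ b : Fin n → M, (∀ i : Fin k, b (Fin.castLE h i) = a i) ∧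
      ∀ j : Fin m, ∑ i, r i j • b i = 0 }

/-- Taking solution sets of pp formulas commutes with directed colimits: if
`M = colim M i` is the direct limit of a directed system of `R`-modules, then `φ(M)` is the
union of the images of the `φ(M i)`. -/
theorem stmt7 (R : Type*) [Ring R] {n m k : ℕ} (h : k ≤ n) (r : Fin n → Fin m → R)
    {ι : Type*} [Preorder ι] [Nonempty ι] [IsDirected ι (· ≤ ·)] [DecidableEq ι]
    (G : ι → Type*) [∀ i, AddCommGroup (G i)] [∀ i, Module R (G i)]
    (f : ∀ i j, i ≤ j → G i →ₗ[R] G j) [DirectedSystem G (fun i j hij => f i j hij)]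
    (a : Fin k → Module.DirectLimit G f) :
    a ∈ ppSet R h r (Module.DirectLimit G f) ↔
      ∃ (i : ι) (b : Fin k → G i),
        (∀ j, Module.DirectLimit.of R ι G f i (b j) = a j) ∧ b ∈ ppSet R h r (G i) := by
  constructor
  · rintro ⟨b', hb'ext, hb'eq⟩
    -- lift each coordinate of b' to some component
    choose idx c hc using fun t : Fin n => Module.DirectLimit.exists_of (b' t)
    -- upper bound of all indices
    obtain ⟨i0, hi0⟩ := (Finset.univ.image idx).exists_le
    have hi0' : ∀ t, idx t ≤ i0 := fun t =>
      hi0 _ (Finset.mem_image_of_mem idx (Finset.mem_univ t))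
    set c' : Fin n → G i0 := fun t => f (idx t) i0 (hi0' t) (c t) with hc'
    have hofc' : ∀ t, Module.DirectLimit.of R ι G f i0 (c' t) = b' t := fun t => by
      rw [hc', Module.DirectLimit.of_f, hc]
    -- each equation's LHS maps to zero in the colimit
    have hz : ∀ j : Fin m, Module.DirectLimit.of R ι G f i0 (∑ t, r t j • c' t) = 0 := by
      intro j
      rw [map_sum]
      simp_rw [map_smul, hofc']
      exact hb'eq j
    -- so each vanishes at some later stage
    choose idx2 hle2 hz2 using fun j : Fin m => Module.DirectLimit.of.zero_exact (hz j)
    obtain ⟨i1, hi1⟩ := (insert i0 (Finset.univ.image idx2)).exists_le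
    have hi01 : i0 ≤ i1 := hi1 _ (Finset.mem_insert_self _ _)
    have hle2' : ∀ j, idx2 j ≤ i1 := fun j =>
      hi1 _ (Finset.mem_insert_of_mem (Finset.mem_image_of_mem idx2 (Finset.mem_univ j)))
    set d : Fin n → G i1 := fun t => f i0 i1 hi01 (c' t) with hd
    refine ⟨i1, fun j => d (Fin.castLE h j), fun j => ?_, d, fun _ => rfl, fun j => ?_⟩
    · rw [hd, Module.DirectLimit.of_f, hofc', hb'ext]
    · have : ∑ t, r t j • d t = f i0 i1 hi01 (∑ t, r t j • c' t) := by
        rw [map_sum]; simp_rw [map_smul]; rfl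
      rw [this, ← DirectedSystem.map_map (f := fun i j hij => f i j hij) (hle2 j) (hle2' j),
        hz2 j, map_zero]
  · rintro ⟨i, b, hb, d, hdext, hdeq⟩
    refine ⟨fun t => Module.DirectLimit.of R ι G f i (d t), fun t => by
      show Module.DirectLimit.of R ι G f i (d (Fin.castLE h t)) = a t
      rw [hdext, hb], fun j => ?_⟩
    have : ∑ t, r t j • Module.DirectLimit.of R ι G f i (d t)
        = Module.DirectLimit.of R ι G f i (∑ t, r t j • d t) := by
      rw [map_sum]; simp_rw [map_smul]
    rw [this, hdeq j, map_zero]
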